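/- arXiv:2511.06162 — 2 statements merged into one kernel-verified Lean document; each statement's English description precedes it below -/
import Mathlib

section
/- Let (T, L, c, r) be a rooted WDTAP instance with visible width at most k, and let F ⊆ L be a shadow-minimal feasible solution (no link of F can be replaced by a proper shadow while maintaining feasibility). Then F is 2k-thin: for every vertex v, the number of links ℓ ∈ F such that v is an inner vertex of the tree path P_ℓ is at most 2k. -/
open scoped Classical

/-- A tree on vertex set `V`, rooted at `root`, encoded via the parent function.
Every non-root vertex `z` corresponds to the unique tree edge/arc `a_z` between
`z` and `parent z`. -/
structure ArcTree (V : Type*) where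
  root : V
  parent : V → V
  parent_root : parent root = root
  reaches_root : ∀ v : V, ∃ n : ℕ, parent^[n] v = root

namespace ArcTree

variable {V : Type*}

/-- `x` is an ancestor of `y` (possibly `x = y`). -/
def anc (T : ArcTree V) (x y : V) : Prop := ∃ n : ℕ, T.parent^[n] y = x

/-- The arc `a_z` (between `z` and `parent z`, for `z ≠ root`) lies on the
tree path between `u` and `v`. -/
def arcOnPath (T : ArcTree V) (u v z : V) : Prop :=
  z ≠ T.root ∧ ¬ (T.anc z u ↔ T.anc z v)

/-- The vertex `x` lies on the tree path between `u` and `v`. -/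
def onPath (T : ArcTree V) (u v x : V) : Prop :=
  (T.anc x u ∨ T.anc x v) ∧ ∀ z, T.anc z u → T.anc z v → T.anc z x

/-- `x` is an inner vertex of the tree path between `u` and `v`. -/
def innerOnPath (T : ArcTree V) (u v x : V) : Prop :=
  T.onPath u v x ∧ x ≠ u ∧ x ≠ v

/-- `w` is the least common ancestor of `u` and `v`. -/
def isLca (T : ArcTree V) (u v w : V) : Prop :=
  T.anc w u ∧ T.anc w v ∧ ∀ z, T.anc z u → T.anc z v → T.anc z w

end ArcTree

section Cover

variable {V : Type*}

/- Orientation convention: `up z = true` means the arc `a_z` is directed from `z` to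
`parent z` (an up-arc, pointing towards the root); `up z = false` means it is directed
from `parent z` to `z` (a down-arc). -/

/-- The directed link `ℓ = (u, v)` covers the arc `a_z`, i.e. `a_z` is a backward arc
of the tree path from `u` to `v` (equivalently, the walk from `v` back to `u`
traverses `a_z` in its forward direction). -/
def covers (T : ArcTree V) (up : V → Bool) (ℓ : V × V) (z : V) : Prop :=
  z ≠ T.root ∧
    ((T.anc z ℓ.2 ∧ ¬ T.anc z ℓ.1 ∧ up z = true) ∨
     (T.anc z ℓ.1 ∧ ¬ T.anc z ℓ.2 ∧ up z = false))

/-- The link `ℓ = (u,v)` covers the arc `a_z` in the wrong direction, i.e. `a_z` is a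
forward arc of the tree path from `u` to `v`. -/
def wcovers (T : ArcTree V) (up : V → Bool) (ℓ : V × V) (z : V) : Prop :=
  z ≠ T.root ∧
    ((T.anc z ℓ.1 ∧ ¬ T.anc z ℓ.2 ∧ up z = true) ∨
     (T.anc z ℓ.2 ∧ ¬ T.anc z ℓ.1 ∧ up z = false))

/-- `ℓ'` is a shadow of `ℓ`: the endpoints of `ℓ'` lie, in this order, on the tree path
of `ℓ`. -/
def IsShadow (T : ArcTree V) (ℓ ℓ' : V × V) : Prop :=
  T.onPath ℓ.1 ℓ.2 ℓ'.1 ∧ T.onPath ℓ'.1 ℓ.2 ℓ'.2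

/-- `x` is an inner vertex of the path of the generic shadow of `ℓ` (the minimal shadow
with the same directed coverage): `x` lies on `P_ℓ` and `ℓ` covers arcs on both sides
of `x`. -/
def innerGeneric (T : ArcTree V) (up : V → Bool) (ℓ : V × V) (x : V) : Prop :=
  T.onPath ℓ.1 ℓ.2 x ∧
    (∃ z, covers T up ℓ z ∧ T.arcOnPath ℓ.1 x z) ∧
    (∃ z, covers T up ℓ z ∧ T.arcOnPath x ℓ.2 z)

/-- The arc `a_z` (lying in the subtree of `v`) is visible to `v` with respect to the
link set `L'`. -/
def visibleArc (T : ArcTree V) (up : V → Bool) (L' : Set (V × V)) (v z : V) : Prop :=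
  T.anc v z ∧ z ≠ v ∧ ∃ ℓ ∈ L', covers T up ℓ z ∧ innerGeneric T up ℓ v

/-- A set of arcs (encoded by their lower endpoints) is ancestor-free: no arc of the
set lies on the path from another arc's apex (top endpoint) to the root. -/
def AncestorFree (T : ArcTree V) (S : Set V) : Prop :=
  ∀ z ∈ S, ∀ z' ∈ S, z ≠ z' → ¬ T.anc z' (T.parent z)

/-- The visible up-width of `v` w.r.t. the link set `L'` is at most `k`. -/
def upWidthLE (T : ArcTree V) (up : V → Bool) (L' : Set (V × V)) (v : V) (k : ℕ) : Prop :=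
  ∀ S : Finset V, AncestorFree T (S : Set V) →
    (∀ z ∈ S, up z = true ∧ visibleArc T up L' v z) → S.card ≤ k

/-- The visible down-width of `v` w.r.t. the link set `L'` is at most `k`. -/
def downWidthLE (T : ArcTree V) (up : V → Bool) (L' : Set (V × V)) (v : V) (k : ℕ) : Prop :=
  ∀ S : Finset V, AncestorFree T (S : Set V) →
    (∀ z ∈ S, up z = false ∧ visibleArc T up L' v z) → S.card ≤ k

/-- The link `ℓ` points into the subtree `T_v`. -/
def pointsInto (T : ArcTree V) (v : V) (ℓ : V × V) : Prop :=
  T.anc v ℓ.2 ∧ ℓ.2 ≠ v ∧ ¬ T.anc v ℓ.1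

/-- The link `ℓ` points out of the subtree `T_v`. -/
def pointsOut (T : ArcTree V) (v : V) (ℓ : V × V) : Prop :=
  T.anc v ℓ.1 ∧ ℓ.1 ≠ v ∧ ¬ T.anc v ℓ.2

/-- `v` is up-independent w.r.t. the link set `L'`: every link either covers no up-arc
of the subtree `T_v`, or its whole coverage lies inside `T_v`. -/
def upIndep (T : ArcTree V) (up : V → Bool) (L' : Set (V × V)) (v : V) : Prop :=
  ∀ ℓ ∈ L', (¬ ∃ z, covers T up ℓ z ∧ T.anc v z ∧ z ≠ v ∧ up z = true) ∨
    (∀ z, covers T up ℓ z → T.anc v z ∧ z ≠ v)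

/-- `v` is down-independent w.r.t. the link set `L'`. -/
def downIndep (T : ArcTree V) (up : V → Bool) (L' : Set (V × V)) (v : V) : Prop :=
  ∀ ℓ ∈ L', (¬ ∃ z, covers T up ℓ z ∧ T.anc v z ∧ z ≠ v ∧ up z = false) ∨
    (∀ z, covers T up ℓ z → T.anc v z ∧ z ≠ v)

/-- A feasible (integral) solution: every arc is covered by some link of `F`. -/
def Feasible (T : ArcTree V) (up : V → Bool) (F : Finset (V × V)) : Prop :=
  ∀ z, z ≠ T.root → ∃ ℓ ∈ F, covers T up ℓ z

/-- `F` is shadow-minimal: no link of `F` can be replaced by a proper shadow while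
maintaining feasibility. -/
def ShadowMinimal (T : ArcTree V) (up : V → Bool) (F : Finset (V × V)) : Prop :=
  ∀ ℓ ∈ F, ∀ ℓ' : V × V, IsShadow T ℓ ℓ' → ℓ' ≠ ℓ →
    ¬ Feasible T up (insert ℓ' (F.erase ℓ))

/-- A splitting of the link set: each link is mapped to a set of shadows whose tree
paths partition the arc set of its tree path. -/
def IsSplitting (T : ArcTree V) (σ : V × V → Finset (V × V)) : Prop :=
  ∀ ℓ : V × V,
    (σ ℓ).Nonempty ∧
    (∀ ℓ' ∈ σ ℓ, IsShadow T ℓ ℓ' ∧ (ℓ'.1 ≠ ℓ'.2 ∨ ℓ' = ℓ)) ∧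
    (∀ z, T.arcOnPath ℓ.1 ℓ.2 z ↔ ∃ ℓ' ∈ σ ℓ, T.arcOnPath ℓ'.1 ℓ'.2 z) ∧
    (∀ ℓ₁ ∈ σ ℓ, ∀ ℓ₂ ∈ σ ℓ, ℓ₁ ≠ ℓ₂ →
      ∀ z, T.arcOnPath ℓ₁.1 ℓ₁.2 z → ¬ T.arcOnPath ℓ₂.1 ℓ₂.2 z)

/-- The LP solution obtained from `x` by applying the splitting `σ`. -/
noncomputable def splitSol [Fintype V] (σ : V × V → Finset (V × V)) (x : V × V → ℝ) :
    V × V → ℝ :=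
  fun ℓ' => ∑ ℓ : V × V, if ℓ' ∈ σ ℓ then x ℓ else 0

/-- `x` is a feasible solution of the WDTAP set-covering LP. -/
def FeasLP [Fintype V] (T : ArcTree V) (up : V → Bool) (x : V × V → ℝ) : Prop :=
  (∀ ℓ, 0 ≤ x ℓ) ∧
    ∀ z, z ≠ T.root → 1 ≤ ∑ ℓ : V × V, if covers T up ℓ z then x ℓ else 0

end Cover

section AuxLemmas

namespace ArcTree

variable {V : Type*}

lemma anc_refl (T : ArcTree V) (x : V) : T.anc x x := ⟨0, rfl⟩

lemma anc_trans (T : ArcTree V) {a b c : V} (h1 : T.anc a b) (h2 : T.anc b c) :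
    T.anc a c := by
  obtain ⟨n, hn⟩ := h1; obtain ⟨m, hm⟩ := h2
  exact ⟨n + m, by rw [Function.iterate_add_apply, hm, hn]⟩

lemma anc_parent (T : ArcTree V) {x y : V} (h : T.anc x y) : T.anc (T.parent x) y := by
  obtain ⟨n, hn⟩ := h
  exact ⟨n + 1, by rw [Function.iterate_succ_apply', hn]⟩

lemma anc_total (T : ArcTree V) {a b x : V} (h1 : T.anc a x) (h2 : T.anc b x) :
    T.anc a b ∨ T.anc b a := by
  obtain ⟨n, hn⟩ := h1; obtain ⟨m, hm⟩ := h2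
  rcases le_total n m with h | h
  · exact Or.inr ⟨m - n, by
      rw [← hn, ← Function.iterate_add_apply, Nat.sub_add_cancel h, hm]⟩
  · exact Or.inl ⟨n - m, by
      rw [← hm, ← Function.iterate_add_apply, Nat.sub_add_cancel h, hn]⟩

lemma root_fixed (T : ArcTree V) (n : ℕ) : T.parent^[n] T.root = T.root := by
  induction n with
  | zero => rfl
  | succ n ih => rw [Function.iterate_succ_apply', ih, T.parent_root]

lemma periodic_eq_root (T : ArcTree V) {b : V} {p : ℕ} (hp : 0 < p)
    (hper : T.parent^[p] b = b) : b = T.root := by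
  have hmul : ∀ q : ℕ, T.parent^[q * p] b = b := by
    intro q
    induction q with
    | zero => simp
    | succ q ih => rw [Nat.succ_mul, Function.iterate_add_apply, hper, ih]
  obtain ⟨N, hN⟩ := T.reaches_root b
  have hr : T.parent^[N % p] b = T.root := by
    conv_rhs => rw [← hN]
    conv_rhs => rw [← Nat.mod_add_div N p]
    rw [Function.iterate_add_apply]
    congr 1
    rw [Nat.mul_comm]
    exact (hmul _).symm
  have : T.parent^[p - N % p] (T.parent^[N % p] b) = b := by
    rw [← Function.iterate_add_apply, Nat.sub_add_cancel (le_of_lt (Nat.mod_lt _ hp))]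
    exact hper
  rw [hr, root_fixed] at this
  exact this.symm

lemma anc_antisymm (T : ArcTree V) {a b : V} (h1 : T.anc a b) (h2 : T.anc b a) :
    a = b := by
  obtain ⟨n, hn⟩ := h1; obtain ⟨m, hm⟩ := h2
  rcases Nat.eq_zero_or_pos (m + n) with h | h
  · obtain ⟨hm0, hn0⟩ := Nat.add_eq_zero.mp h
    subst hn0; exact hn.symm
  · have hper : T.parent^[m + n] b = b := by
      rw [Function.iterate_add_apply, hn, hm]
    have hb := T.periodic_eq_root h hper
    subst hb
    rw [T.root_fixed] at hn
    exact hn.symm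

end ArcTree

section Priv

variable {V : Type*} [Fintype V]

lemma exists_private_arc (T : ArcTree V) (up : V → Bool) (F : Finset (V × V))
    (hfeas : Feasible T up F) (hmin : ShadowMinimal T up F)
    {ℓ ℓ' : V × V} (hℓ : ℓ ∈ F) (hsh : IsShadow T ℓ ℓ') (hne : ℓ' ≠ ℓ) :
    ∃ z, covers T up ℓ z ∧ ¬ covers T up ℓ' z ∧ ∀ m ∈ F, covers T up m z → m = ℓ := by
  have h := hmin ℓ hℓ ℓ' hsh hne
  rw [Feasible] at h; push_neg at h
  obtain ⟨z, hzr, hz⟩ := h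
  obtain ⟨m, hm, hcm⟩ := hfeas z hzr
  have hm' : m = ℓ := by
    by_contra hne'
    exact hz m (Finset.mem_insert_of_mem (Finset.mem_erase.mpr ⟨hne', hm⟩)) hcm
  subst hm'
  refine ⟨z, hcm, hz ℓ' (Finset.mem_insert_self _ _), ?_⟩
  intro m' hmF hcov
  by_contra hne'
  exact hz m' (Finset.mem_insert_of_mem (Finset.mem_erase.mpr ⟨hne', hmF⟩)) hcov

lemma shadow_left (T : ArcTree V) {ℓ : V × V} {v : V} (h : T.onPath ℓ.1 ℓ.2 v) :
    IsShadow T ℓ (ℓ.1, v) :=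
  ⟨⟨Or.inl (T.anc_refl ℓ.1), fun _ hz _ => hz⟩, h⟩

lemma shadow_right (T : ArcTree V) {ℓ : V × V} {v : V} (h : T.onPath ℓ.1 ℓ.2 v) :
    IsShadow T ℓ (v, ℓ.2) :=
  ⟨h, ⟨Or.inr (T.anc_refl ℓ.2), fun _ _ hz => hz⟩⟩

lemma case_D (T : ArcTree V) (up : V → Bool) (F : Finset (V × V))
    (hfeas : Feasible T up F) (hmin : ShadowMinimal T up F)
    {ℓ : V × V} {v : V} (hℓ : ℓ ∈ F) (hin : T.innerOnPath ℓ.1 ℓ.2 v)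
    (hD : T.anc v ℓ.1) :
    ∃ z, up z = false ∧ covers T up ℓ z ∧ T.anc v z ∧ z ≠ v ∧
      (∀ m ∈ F, covers T up m z → m = ℓ) := by
  obtain ⟨hop, hv1, hv2⟩ := hin
  have hne : (v, ℓ.2) ≠ ℓ := fun h => hv1 (congrArg Prod.fst h)
  obtain ⟨z, hc, hnc, hpriv⟩ :=
    exists_private_arc T up F hfeas hmin hℓ (shadow_right T hop) hne
  obtain ⟨hzr, hcase⟩ := hc
  rcases hcase with ⟨h2, h1, hu⟩ | ⟨h1, h2, hu⟩
  · exfalso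
    have hzv : T.anc z v := by
      by_contra hzv
      exact hnc ⟨hzr, Or.inl ⟨h2, hzv, hu⟩⟩
    exact h1 (T.anc_trans hzv hD)
  · have hzv : ¬ T.anc z v := by
      intro hzv
      exact hnc ⟨hzr, Or.inr ⟨hzv, h2, hu⟩⟩
    have hvz : T.anc v z := (T.anc_total h1 hD).resolve_left hzv
    refine ⟨z, hu, ⟨hzr, Or.inr ⟨h1, h2, hu⟩⟩, hvz, ?_, hpriv⟩
    rintro rfl
    exact hzv (T.anc_refl z)

lemma case_U (T : ArcTree V) (up : V → Bool) (F : Finset (V × V))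
    (hfeas : Feasible T up F) (hmin : ShadowMinimal T up F)
    {ℓ : V × V} {v : V} (hℓ : ℓ ∈ F) (hin : T.innerOnPath ℓ.1 ℓ.2 v)
    (hU : ¬ T.anc v ℓ.1) :
    ∃ z, up z = true ∧ covers T up ℓ z ∧ T.anc v z ∧ z ≠ v ∧
      (∀ m ∈ F, covers T up m z → m = ℓ) := by
  obtain ⟨hop, hv1, hv2⟩ := hin
  have hD : T.anc v ℓ.2 := hop.1.resolve_left hU
  have hne : (ℓ.1, v) ≠ ℓ := fun h => hv2 (congrArg Prod.snd h)
  obtain ⟨z, hc, hnc, hpriv⟩ :=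
    exists_private_arc T up F hfeas hmin hℓ (shadow_left T hop) hne
  obtain ⟨hzr, hcase⟩ := hc
  rcases hcase with ⟨h1, h2, hu⟩ | ⟨h2, h1, hu⟩
  · have hzv : ¬ T.anc z v := by
      intro hzv
      exact hnc ⟨hzr, Or.inl ⟨hzv, h2, hu⟩⟩
    have hvz : T.anc v z := (T.anc_total h1 hD).resolve_left hzv
    refine ⟨z, hu, ⟨hzr, Or.inl ⟨h1, h2, hu⟩⟩, hvz, ?_, hpriv⟩
    rintro rfl
    exact hzv (T.anc_refl z)
  · exfalso
    have hzv : T.anc z v := by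
      by_contra hzv
      exact hnc ⟨hzr, Or.inr ⟨h2, hzv, hu⟩⟩
    exact h1 (T.anc_trans hzv hD)

lemma inner_generic (T : ArcTree V) (up : V → Bool) (F : Finset (V × V))
    (hfeas : Feasible T up F) (hmin : ShadowMinimal T up F)
    {ℓ : V × V} {v : V} (hℓ : ℓ ∈ F) (hin : T.innerOnPath ℓ.1 ℓ.2 v) :
    innerGeneric T up ℓ v := by
  obtain ⟨hop, hv1, hv2⟩ := hin
  refine ⟨hop, ?_, ?_⟩
  · -- an arc between ℓ.1 and v, via the shadow (v, ℓ.2)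
    have hne : (v, ℓ.2) ≠ ℓ := fun h => hv1 (congrArg Prod.fst h)
    obtain ⟨z, hc, hnc, _⟩ :=
      exists_private_arc T up F hfeas hmin hℓ (shadow_right T hop) hne
    refine ⟨z, hc, hc.1, ?_⟩
    obtain ⟨hzr, hcase⟩ := hc
    rcases hcase with ⟨h2, h1, hu⟩ | ⟨h1, h2, hu⟩
    · have hzv : T.anc z v := by
        by_contra hzv
        exact hnc ⟨hzr, Or.inl ⟨h2, hzv, hu⟩⟩
      intro hiff
      exact h1 (hiff.mpr hzv)
    · have hzv : ¬ T.anc z v := by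
        intro hzv
        exact hnc ⟨hzr, Or.inr ⟨hzv, h2, hu⟩⟩
      intro hiff
      exact hzv (hiff.mp h1)
  · -- an arc between v and ℓ.2, via the shadow (ℓ.1, v)
    have hne : (ℓ.1, v) ≠ ℓ := fun h => hv2 (congrArg Prod.snd h)
    obtain ⟨z, hc, hnc, _⟩ :=
      exists_private_arc T up F hfeas hmin hℓ (shadow_left T hop) hne
    refine ⟨z, hc, hc.1, ?_⟩
    obtain ⟨hzr, hcase⟩ := hc
    rcases hcase with ⟨h1, h2, hu⟩ | ⟨h2, h1, hu⟩
    · have hzv : ¬ T.anc z v := by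
        intro hzv
        exact hnc ⟨hzr, Or.inl ⟨hzv, h2, hu⟩⟩
      intro hiff
      exact hzv (hiff.mpr h1)
    · have hzv : T.anc z v := by
        by_contra hzv
        exact hnc ⟨hzr, Or.inr ⟨h2, hzv, hu⟩⟩
      intro hiff
      exact h1 (hiff.mp hzv)

lemma class_card_le (T : ArcTree V) (up : V → Bool) (L : Finset (V × V)) (k : ℕ)
    (v : V) (b : Bool)
    (hw : ∀ S : Finset V, AncestorFree T (S : Set V) →
      (∀ z ∈ S, up z = b ∧ visibleArc T up (L : Set (V × V)) v z) → S.card ≤ k)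
    (F : Finset (V × V)) (hFL : F ⊆ L)
    (D : Finset (V × V)) (hDF : D ⊆ F)
    (hinner : ∀ ℓ ∈ D, T.onPath ℓ.1 ℓ.2 v)
    (hgen : ∀ ℓ ∈ D, innerGeneric T up ℓ v)
    (hex : ∀ ℓ ∈ D, ∃ z, up z = b ∧ covers T up ℓ z ∧ T.anc v z ∧ z ≠ v ∧
      (∀ m ∈ F, covers T up m z → m = ℓ)) :
    D.card ≤ k := by
  classical
  have hex' : ∀ ℓ : V × V, ∃ z, ℓ ∈ D → (up z = b ∧ covers T up ℓ z ∧ T.anc v z ∧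
      z ≠ v ∧ (∀ m ∈ F, covers T up m z → m = ℓ)) := by
    intro ℓ
    by_cases h : ℓ ∈ D
    · obtain ⟨z, hz⟩ := hex ℓ h
      exact ⟨z, fun _ => hz⟩
    · exact ⟨ℓ.1, fun h' => absurd h' h⟩
  choose g hg using hex'
  have hg1 : ∀ ℓ ∈ D, up (g ℓ) = b := fun ℓ hℓ => (hg ℓ hℓ).1
  have hg2 : ∀ ℓ ∈ D, covers T up ℓ (g ℓ) := fun ℓ hℓ => (hg ℓ hℓ).2.1
  have hg3 : ∀ ℓ ∈ D, T.anc v (g ℓ) := fun ℓ hℓ => (hg ℓ hℓ).2.2.1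
  have hg4 : ∀ ℓ ∈ D, g ℓ ≠ v := fun ℓ hℓ => (hg ℓ hℓ).2.2.2.1
  have hg5 : ∀ ℓ ∈ D, ∀ m ∈ F, covers T up m (g ℓ) → m = ℓ :=
    fun ℓ hℓ => (hg ℓ hℓ).2.2.2.2
  have hinj : Set.InjOn g (D : Set (V × V)) := by
    intro ℓ hℓ ℓ' hℓ' heq
    exact hg5 ℓ' hℓ' ℓ (hDF hℓ) (heq ▸ hg2 ℓ hℓ)
  have hcard : (D.image g).card = D.card := Finset.card_image_of_injOn hinj
  rw [← hcard]
  refine hw (D.image g) ?_ ?_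
  · intro z hz z' hz' hne hanc
    simp only [Finset.coe_image, Set.mem_image, Finset.mem_coe] at hz hz'
    obtain ⟨ℓ, hℓ, rfl⟩ := hz
    obtain ⟨ℓ', hℓ', rfl⟩ := hz'
    have hll : ℓ ≠ ℓ' := fun h => hne (by rw [h])
    have hc := hg2 ℓ hℓ
    have hc' := hg2 ℓ' hℓ'
    rcases hc.2 with ⟨h2, h1, hu⟩ | ⟨h1, h2, hu⟩
    · -- up-arc case
      have h2' : T.anc (g ℓ') ℓ.2 := T.anc_trans hanc (T.anc_parent h2)
      have h1' : ¬ T.anc (g ℓ') ℓ.1 := by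
        intro h
        exact hg4 ℓ' hℓ'
          (T.anc_antisymm ((hinner ℓ hℓ).2 _ h h2') (hg3 ℓ' hℓ'))
      have hu' : up (g ℓ') = true :=
        (hg1 ℓ' hℓ').trans ((hg1 ℓ hℓ).symm.trans hu)
      exact hll (hg5 ℓ' hℓ' ℓ (hDF hℓ) ⟨hc'.1, Or.inl ⟨h2', h1', hu'⟩⟩)
    · -- down-arc case
      have h1' : T.anc (g ℓ') ℓ.1 := T.anc_trans hanc (T.anc_parent h1)
      have h2' : ¬ T.anc (g ℓ') ℓ.2 := by
        intro h
        exact hg4 ℓ' hℓ'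
          (T.anc_antisymm ((hinner ℓ hℓ).2 _ h1' h) (hg3 ℓ' hℓ'))
      have hu' : up (g ℓ') = false :=
        (hg1 ℓ' hℓ').trans ((hg1 ℓ hℓ).symm.trans hu)
      exact hll (hg5 ℓ' hℓ' ℓ (hDF hℓ) ⟨hc'.1, Or.inr ⟨h1', h2', hu'⟩⟩)
  · intro z hz
    simp only [Finset.mem_image] at hz
    obtain ⟨ℓ, hℓ, rfl⟩ := hz
    refine ⟨hg1 ℓ hℓ, hg3 ℓ hℓ, hg4 ℓ hℓ, ℓ, ?_, hg2 ℓ hℓ, hgen ℓ hℓ⟩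
    exact Finset.mem_coe.mpr (hFL (hDF hℓ))

end Priv

/-- If the instance `(T, L)` has visible width at most `k` and
`F ⊆ L` is a shadow-minimal feasible solution, then `F` is `2k`-thin: every vertex is an
inner vertex of the tree path of at most `2k` links of `F`. -/
theorem shadow_minimal_solution_is_thin {V : Type*} [Fintype V]
    (T : ArcTree V) (up : V → Bool) (L : Finset (V × V)) (k : ℕ)
    (hwidth : ∀ v : V, upWidthLE T up (L : Set (V × V)) v k ∧
      downWidthLE T up (L : Set (V × V)) v k)
    (F : Finset (V × V)) (hFL : F ⊆ L)
    (hfeas : Feasible T up F) (hmin : ShadowMinimal T up F) :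
    ∀ v : V, (F.filter (fun ℓ => T.innerOnPath ℓ.1 ℓ.2 v)).card ≤ 2 * k := by
  intro v
  classical
  set Fv := F.filter (fun ℓ => T.innerOnPath ℓ.1 ℓ.2 v) with hFvdef
  have hFvF : Fv ⊆ F := Finset.filter_subset _ _
  have hFvIn : ∀ ℓ ∈ Fv, T.innerOnPath ℓ.1 ℓ.2 v := fun ℓ hℓ =>
    (Finset.mem_filter.mp hℓ).2
  have hsplit :
      (Fv.filter (fun ℓ => T.anc v ℓ.1)).card +
        (Fv.filter (fun ℓ => ¬ T.anc v ℓ.1)).card = Fv.card :=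
    Finset.card_filter_add_card_filter_not _
  have hDcard : (Fv.filter (fun ℓ => T.anc v ℓ.1)).card ≤ k := by
    refine class_card_le T up L k v false (hwidth v).2 F hFL _
      ((Finset.filter_subset _ _).trans hFvF) ?_ ?_ ?_
    · intro ℓ hℓ
      exact (hFvIn ℓ (Finset.filter_subset _ _ hℓ)).1
    · intro ℓ hℓ
      exact inner_generic T up F hfeas hmin (hFvF (Finset.filter_subset _ _ hℓ))
        (hFvIn ℓ (Finset.filter_subset _ _ hℓ))
    · intro ℓ hℓ
      exact case_D T up F hfeas hmin (hFvF (Finset.filter_subset _ _ hℓ))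
        (hFvIn ℓ (Finset.filter_subset _ _ hℓ)) (Finset.mem_filter.mp hℓ).2
  have hUcard : (Fv.filter (fun ℓ => ¬ T.anc v ℓ.1)).card ≤ k := by
    refine class_card_le T up L k v true (hwidth v).1 F hFL _
      ((Finset.filter_subset _ _).trans hFvF) ?_ ?_ ?_
    · intro ℓ hℓ
      exact (hFvIn ℓ (Finset.filter_subset _ _ hℓ)).1
    · intro ℓ hℓ
      exact inner_generic T up F hfeas hmin (hFvF (Finset.filter_subset _ _ hℓ))
        (hFvIn ℓ (Finset.filter_subset _ _ hℓ))
    · intro ℓ hℓ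
      exact case_U T up F hfeas hmin (hFvF (Finset.filter_subset _ _ hℓ))
        (hFvIn ℓ (Finset.filter_subset _ _ hℓ)) (Finset.mem_filter.mp hℓ).2
  calc Fv.card = _ + _ := hsplit.symm
    _ ≤ k + k := Nat.add_le_add hDcard hUcard
    _ = 2 * k := (Nat.two_mul k).symm
end AuxLemmas
end

section
/- For any splitting σ of the link set and any subset A' of tree arcs, the inequality Σ_{ℓ ∈ L} (Σ_{ℓ' ∈ σ(ℓ)} c(ℓ')) · x_ℓ ≥ c(OPT(T/A', supp(σ)/A', c)) is valid for the integer hull of the WDTAP set-covering LP, where OPT denotes an optimal solution of the WDTAP instance obtained by contracting the arcs A' and restricting the links to the supports of σ. -/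
open scoped Classical

section Aux
variable {V : Type*}

theorem anc_trans' (T : ArcTree V) {a b c : V} (h1 : T.anc a b) (h2 : T.anc b c) :
    T.anc a c := by
  obtain ⟨n, hn⟩ := h1
  obtain ⟨m, hm⟩ := h2
  exact ⟨n + m, by rw [Function.iterate_add_apply, hm, hn]⟩

/-- Shadow coverage transfer. -/
theorem shadow_covers (T : ArcTree V) (up : V → Bool) {ℓ ℓ' : V × V} {z : V}
    (hsh : IsShadow T ℓ ℓ') (harc : T.arcOnPath ℓ'.1 ℓ'.2 z)
    (hcov : covers T up ℓ z) : covers T up ℓ' z := by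
  obtain ⟨h1, h2⟩ := hsh
  obtain ⟨hzr, hxor⟩ := harc
  obtain ⟨_, hcase⟩ := hcov
  refine ⟨hzr, ?_⟩
  rcases hcase with ⟨hz2, hz1, hup⟩ | ⟨hz1, hz2, hup⟩
  · left
    by_cases ha : T.anc z ℓ'.1
    · exfalso
      have := h2.2 z ha hz2
      exact hxor ⟨fun _ => this, fun _ => ha⟩
    · refine ⟨?_, ha, hup⟩
      by_contra hb
      exact hxor ⟨fun h => absurd h ha, fun h => absurd h hb⟩
  · right
    by_cases hb : T.anc z ℓ'.2
    · exfalso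
      rcases h2.1 with hca | hcb
      · have : T.anc z ℓ'.1 := anc_trans' T hb hca
        exact hxor ⟨fun _ => hb, fun _ => this⟩
      · exact hz2 (anc_trans' T hb hcb)
    · refine ⟨?_, hb, hup⟩
      by_contra ha
      exact hxor ⟨fun h => absurd h ha, fun h => absurd h hb⟩

theorem sum_biUnion_le' {α β : Type*} [DecidableEq β] (f : β → ℝ) (hf : ∀ b, 0 ≤ f b)
    (s : Finset α) (t : α → Finset β) :
    ∑ b ∈ s.biUnion t, f b ≤ ∑ a ∈ s, ∑ b ∈ t a, f b := by
  classical
  induction s using Finset.induction with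
  | empty => simp
  | @insert a s ha ih =>
    rw [Finset.biUnion_insert, Finset.sum_insert ha]
    have h1 : ∑ b ∈ t a ∪ s.biUnion t, f b + ∑ b ∈ t a ∩ s.biUnion t, f b
        = ∑ b ∈ t a, f b + ∑ b ∈ s.biUnion t, f b := Finset.sum_union_inter
    have h2 : 0 ≤ ∑ b ∈ t a ∩ s.biUnion t, f b := Finset.sum_nonneg fun b _ => hf b
    linarith
end Aux

/-- Validity of the modification inequality: for every splitting `σ`,
every arc set `A'` and every integral feasible solution `x`, the contracted instance
(arcs outside `A'` must be covered, links restricted to `supp(σ)`) admits a solution of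
cost at most `Σ_ℓ (Σ_{ℓ' ∈ σ(ℓ)} c(ℓ'))·x_ℓ`; hence the inequality
`Σ_ℓ (Σ_{ℓ' ∈ σ(ℓ)} c(ℓ'))·x_ℓ ≥ c(OPT(T/A', supp(σ)/A'))` is valid for the integer
hull of the set-covering LP. -/
theorem modification_inequality_valid {V : Type*} [Fintype V]
    (T : ArcTree V) (up : V → Bool)
    (c : V × V → ℝ) (hc : ∀ ℓ, 0 < c ℓ)
    (σ : V × V → Finset (V × V)) (hσ : IsSplitting T σ) (A' : Set V)
    (x : V × V → ℝ) (hx01 : ∀ ℓ, x ℓ = 0 ∨ x ℓ = 1)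
    (hxfeas : ∀ z, z ≠ T.root → 1 ≤ ∑ ℓ : V × V, if covers T up ℓ z then x ℓ else 0) :
    ∃ F : Finset (V × V),
      (∀ ℓ ∈ F, ∃ ℓ₀ : V × V, ℓ ∈ σ ℓ₀) ∧
      (∀ z, z ≠ T.root → z ∉ A' → ∃ ℓ ∈ F, covers T up ℓ z) ∧
      (∑ ℓ ∈ F, c ℓ) ≤ ∑ ℓ : V × V, (∑ ℓ' ∈ σ ℓ, c ℓ') * x ℓ := by
  classical
  set s : Finset (V × V) := Finset.univ.filter (fun ℓ => x ℓ = 1) with hs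
  refine ⟨s.biUnion σ, ?_, ?_, ?_⟩
  · intro ℓ hℓ
    obtain ⟨ℓ₀, _, h⟩ := Finset.mem_biUnion.1 hℓ
    exact ⟨ℓ₀, h⟩
  · intro z hz _
    have h1 := hxfeas z hz
    have hex : ∃ ℓ₀, covers T up ℓ₀ z ∧ x ℓ₀ = 1 := by
      by_contra hcon
      push_neg at hcon
      have hzero : (∑ ℓ : V × V, if covers T up ℓ z then x ℓ else 0) = 0 := by
        apply Finset.sum_eq_zero
        intro ℓ _
        split_ifs with h
        · rcases hx01 ℓ with h0 | h0
          · exact h0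
          · exact absurd h0 (hcon ℓ h)
        · rfl
      rw [hzero] at h1
      linarith
    obtain ⟨ℓ₀, hcov, hx1⟩ := hex
    have harc : T.arcOnPath ℓ₀.1 ℓ₀.2 z := by
      refine ⟨hcov.1, ?_⟩
      rcases hcov.2 with ⟨h2, h1', _⟩ | ⟨h1', h2, _⟩
      · exact fun hiff => h1' (hiff.2 h2)
      · exact fun hiff => h2 (hiff.1 h1')
    obtain ⟨ℓ', hℓ'σ, harc'⟩ := ((hσ ℓ₀).2.2.1 z).1 harc
    refine ⟨ℓ', Finset.mem_biUnion.2 ⟨ℓ₀, by simp [hs, hx1], hℓ'σ⟩, ?_⟩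
    exact shadow_covers T up ((hσ ℓ₀).2.1 ℓ' hℓ'σ).1 harc' hcov
  · have hle := sum_biUnion_le' c (fun b => (hc b).le) s σ
    refine hle.trans (le_of_eq ?_)
    rw [← Finset.sum_filter_add_sum_filter_not Finset.univ (fun ℓ => x ℓ = 1)
      (fun ℓ => (∑ ℓ' ∈ σ ℓ, c ℓ') * x ℓ)]
    have e1 : ∑ ℓ ∈ s, ∑ ℓ' ∈ σ ℓ, c ℓ'
        = ∑ ℓ ∈ Finset.univ.filter (fun ℓ => x ℓ = 1), (∑ ℓ' ∈ σ ℓ, c ℓ') * x ℓ := by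
      apply Finset.sum_congr rfl
      intro ℓ hℓ
      rw [Finset.mem_filter] at hℓ
      rw [hℓ.2, mul_one]
    have e2 : ∑ ℓ ∈ Finset.univ.filter (fun ℓ => ¬ x ℓ = 1), (∑ ℓ' ∈ σ ℓ, c ℓ') * x ℓ = 0 := by
      apply Finset.sum_eq_zero
      intro ℓ hℓ
      rw [Finset.mem_filter] at hℓ
      rcases hx01 ℓ with h0 | h0
      · rw [h0, mul_zero]
      · exact absurd h0 hℓ.2
    rw [e1, e2, add_zero]
end
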